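/- Let G be a finite group acting linearly and faithfully on a finite 𝔽_p-vector space M of dimension n, and let P be a set of representatives of the cyclic subgroups of prime order of G. If for every g ∈ P the fixed space Fix_M(g) has 𝔽_p-dimension at most n(1 − 1/r) for a fixed r ≥ 2, then the number R of regular G-orbits on M satisfies |G|·R ≥ pⁿ − |P|·p^{n(1−1/r)}. -/

import Mathlib

lemma ncard_biUnion_le' {ι M : Type*} [Finite M] (s : Finset ι) (F : ι → Set M) :
    (⋃ i ∈ s, F i).ncard ≤ ∑ i ∈ s, (F i).ncard := by
  classical
  induction s using Finset.induction with
  | empty => simp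
  | @insert a s ha ih =>
    rw [Finset.set_biUnion_insert, Finset.sum_insert ha]
    exact le_trans (Set.ncard_union_le _ _) (by omega)

/-- Counting lemma for regular orbits: let a finite group `G` act faithfully and linearly
on a finite `𝔽_p`-vector space `M` of dimension `n`, and let `P` be a set of generators,
one for each cyclic subgroup of prime order of `G`. If for every `g ∈ P` the fixed space
of `g` has size at most `p^(n(1-1/r))` (i.e. dimension at most `n(1-1/r)`) for some fixed
`r ≥ 2`, then the number `R` of regular `G`-orbits on `M` satisfies
`|G| · R ≥ p^n - |P| · p^(n(1-1/r))`. -/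
theorem stmt_14 (G : Type) [Group G] [Finite G]
    (p : ℕ) (hp : p.Prime)
    (M : Type) [AddCommGroup M] [Module (ZMod p) M] [Finite M]
    (n : ℕ) (hn : Module.finrank (ZMod p) M = n)
    (ρ : G →* (M →ₗ[ZMod p] M)ˣ) (hfaith : Function.Injective ρ)
    (P : Finset G)
    (hP : ∀ g : G, (∃ q : ℕ, q.Prime ∧ orderOf g = q) →
      ∃ h ∈ P, Subgroup.zpowers h = Subgroup.zpowers g)
    (r : ℝ) (hr : 2 ≤ r)
    (hfix : ∀ g ∈ P,
      (Set.ncard {v : M | (ρ g).val v = v} : ℝ) ≤ (p : ℝ) ^ ((n : ℝ) * (1 - 1 / r))) :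
    (p : ℝ) ^ (n : ℝ) - (P.card : ℝ) * (p : ℝ) ^ ((n : ℝ) * (1 - 1 / r)) ≤
      (Nat.card G : ℝ) *
        (Set.ncard {O : Set M | ∃ v : M, (∀ g : G, (ρ g).val v = v → g = 1) ∧
          O = {w : M | ∃ g : G, (ρ g).val v = w}} : ℝ) := by
  classical
  haveI : Fact p.Prime := ⟨hp⟩
  -- stabilizer subgroup
  set stab : M → Subgroup G := fun v =>
    { carrier := {g : G | (ρ g).val v = v}
      one_mem' := by simp
      mul_mem' := by
        intro a b ha hb
        simp only [Set.mem_setOf_eq] at *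
        rw [map_mul, Units.val_mul, Module.End.mul_apply, hb, ha]
      inv_mem' := by
        intro a ha
        simp only [Set.mem_setOf_eq] at *
        conv_lhs => rw [← ha]
        rw [map_inv, ← Module.End.mul_apply, ← Units.val_mul, inv_mul_cancel, Units.val_one,
          Module.End.one_apply] }
    with hstab
  set Reg : Set M := {v : M | ∀ g : G, (ρ g).val v = v → g = 1} with hReg
  set Orb : Set (Set M) := {O : Set M | ∃ v : M, (∀ g : G, (ρ g).val v = v → g = 1) ∧
          O = {w : M | ∃ g : G, (ρ g).val v = w}} with hOrb
  -- covering
  have hcover : (Set.univ : Set M) ⊆ Reg ∪ ⋃ g ∈ P, {v : M | (ρ g).val v = v} := by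
    intro v _
    by_cases hv : ∀ g : G, (ρ g).val v = v → g = 1
    · exact Or.inl hv
    · push_neg at hv
      obtain ⟨g, hgfix, hg1⟩ := hv
      have hord : orderOf g ≠ 0 := (orderOf_pos g).ne'
      obtain ⟨q, hq, hqdvd⟩ := (orderOf g).exists_prime_and_dvd (by
        simpa using fun h => hg1 (orderOf_eq_one_iff.mp h))
      set h := g ^ (orderOf g / q) with hh
      have hhord : orderOf h = q := orderOf_pow_orderOf_div hord hqdvd
      obtain ⟨h', hh'P, hh'z⟩ := hP h ⟨q, hq, hhord⟩
      have hgstab : g ∈ stab v := hgfix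
      have hhstab : h ∈ stab v := pow_mem hgstab _
      have hh'stab : h' ∈ stab v := by
        have : Subgroup.zpowers h' ≤ stab v := by
          rw [hh'z]
          exact (Subgroup.zpowers_le).mpr hhstab
        exact this (Subgroup.mem_zpowers h')
      exact Or.inr (Set.mem_biUnion hh'P hh'stab)
  -- count
  have hMle : Nat.card M ≤ Reg.ncard + ∑ g ∈ P, Set.ncard {v : M | (ρ g).val v = v} := by
    calc Nat.card M = (Set.univ : Set M).ncard := (Set.ncard_univ M).symm
      _ ≤ (Reg ∪ ⋃ g ∈ P, {v : M | (ρ g).val v = v}).ncard :=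
          Set.ncard_le_ncard hcover (Set.toFinite _)
      _ ≤ Reg.ncard + (⋃ g ∈ P, {v : M | (ρ g).val v = v}).ncard := Set.ncard_union_le _ _
      _ ≤ _ := by exact add_le_add le_rfl (ncard_biUnion_le' P _)
  -- Reg bounded by |G| * number of regular orbits
  have hOrbfin : Orb.Finite := Set.toFinite _
  have hRegle : Reg.ncard ≤ Nat.card G * Orb.ncard := by
    have hsub : Reg ⊆ ⋃ O ∈ hOrbfin.toFinset, O := by
      intro v hv
      simp only [Set.mem_iUnion]
      refine ⟨{w : M | ∃ g : G, (ρ g).val v = w}, ?_, ⟨1, by simp⟩⟩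
      simp only [Set.Finite.mem_toFinset, hOrb, Set.mem_setOf_eq]
      exact ⟨v, hv, rfl⟩
    have horbcard : ∀ O ∈ hOrbfin.toFinset, O.ncard ≤ Nat.card G := by
      intro O hO
      rw [Set.Finite.mem_toFinset] at hO
      obtain ⟨v, -, rfl⟩ := hO
      have : {w : M | ∃ g : G, (ρ g).val v = w} = (fun g : G => (ρ g).val v) '' Set.univ := by
        ext w; simp [eq_comm]
      rw [this]
      calc ((fun g : G => (ρ g).val v) '' Set.univ).ncard ≤ (Set.univ : Set G).ncard :=
            Set.ncard_image_le (Set.finite_univ)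
        _ = Nat.card G := Set.ncard_univ G
    calc Reg.ncard ≤ (⋃ O ∈ hOrbfin.toFinset, O).ncard :=
          Set.ncard_le_ncard hsub (Set.toFinite _)
      _ ≤ ∑ O ∈ hOrbfin.toFinset, O.ncard := ncard_biUnion_le' _ _
      _ ≤ ∑ _O ∈ hOrbfin.toFinset, Nat.card G := Finset.sum_le_sum horbcard
      _ = hOrbfin.toFinset.card * Nat.card G := by rw [Finset.sum_const, smul_eq_mul]
      _ = Nat.card G * Orb.ncard := by
          rw [mul_comm, Set.ncard_eq_toFinset_card Orb hOrbfin]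
  -- cardinality of M
  have hcardM : (Nat.card M : ℝ) = (p : ℝ) ^ (n : ℝ) := by
    haveI : Fintype M := Fintype.ofFinite M
    have := Module.card_eq_pow_finrank (K := ZMod p) (V := M)
    rw [Nat.card_eq_fintype_card, this, ZMod.card, hn]
    push_cast
    rw [Real.rpow_natCast]
  -- assemble
  rw [sub_le_iff_le_add, ← hcardM]
  calc (Nat.card M : ℝ) ≤ (Reg.ncard : ℝ) + ∑ g ∈ P, (Set.ncard {v : M | (ρ g).val v = v} : ℝ) := by
        exact_mod_cast hMle
    _ ≤ (Nat.card G : ℝ) * Orb.ncard + (P.card : ℝ) * (p : ℝ) ^ ((n : ℝ) * (1 - 1 / r)) := by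
        gcongr
        · exact_mod_cast hRegle
        · calc ∑ g ∈ P, (Set.ncard {v : M | (ρ g).val v = v} : ℝ)
              ≤ ∑ _g ∈ P, (p : ℝ) ^ ((n : ℝ) * (1 - 1 / r)) := Finset.sum_le_sum hfix
            _ = (P.card : ℝ) * (p : ℝ) ^ ((n : ℝ) * (1 - 1 / r)) := by
                rw [Finset.sum_const, nsmul_eq_mul]
    _ = _ := by ring
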